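/- Let λ ∈ (Q_A)_0 with λ_a ∈ {0,1} for all a ∈ A, and suppose the reduced poset of (P,A,λ) splits as a disjoint union of full subposets P_1 ∪ P_2 (no comparabilities across). With λ^j as the restriction of λ to A ∩ P_j extended by zero, the lattice points satisfy S_C(λ) = S_C(λ^1) + S_C(λ^2) (Minkowski sum), hence λ is not C-indecomposable. -/

import Mathlib

open Pointwise

variable {α : Type*}

/-- A chain `a ≺ x₁ ≺ … ≺ xₙ ≺ b` with `a, b ∈ A`, all `xᵢ ∉ A`, `n ≥ 1`. -/
def MChain [PartialOrder α] (A : Set α) (a b : α) (l : List α) : Prop :=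
  a ∈ A ∧ b ∈ A ∧ l ≠ [] ∧ (∀ x ∈ l, x ∉ A) ∧ List.Chain' (· < ·) (a :: (l ++ [b]))

/-- The marked chain polytope, realized as the subset of `α → ℝ` of functions vanishing
on the marked set `A` (i.e. `ℝ^{P∖A}`). -/
def markedChainPolytope [PartialOrder α] (A : Set α) (lam : α → ℤ) : Set (α → ℝ) :=
  { s | (∀ x ∈ A, s x = 0) ∧ (∀ x, x ∉ A → 0 ≤ s x) ∧
    ∀ a b l, MChain A a b l → (l.map s).sum ≤ (lam b : ℝ) - (lam a : ℝ) }

/-- The marked order polytope, realized as the subset of `α → ℝ` of functions agreeing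
with the marking on `A` (i.e. `ℝ^{P∖A}`). -/
def markedOrderPolytope [PartialOrder α] (A : Set α) (lam : α → ℤ) : Set (α → ℝ) :=
  { s | (∀ x ∈ A, s x = (lam x : ℝ)) ∧
    (∀ x y, x ∉ A → y ∉ A → x < y → s x ≤ s y) ∧
    (∀ a ∈ A, ∀ x, x ∉ A → a < x → (lam a : ℝ) ≤ s x) ∧
    (∀ b ∈ A, ∀ x, x ∉ A → x < b → s x ≤ (lam b : ℝ)) }

/-- `λ ∈ Q_A`: a nonnegative integer marking, weakly increasing along `≺` on `A`. -/
def IsMarking [PartialOrder α] (A : Set α) (lam : α → ℤ) : Prop :=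
  (∀ a ∈ A, 0 ≤ lam a) ∧ ∀ a ∈ A, ∀ b ∈ A, a < b → lam a ≤ lam b

/-- `A` contains all minimal and all maximal elements of the poset. -/
def ContainsExtremals [PartialOrder α] (A : Set α) : Prop :=
  (∀ x : α, IsMin x → x ∈ A) ∧ (∀ x : α, IsMax x → x ∈ A)

/-- `S_C(λ)`: the lattice points of the marked chain polytope. -/
def markedChainLattice [PartialOrder α] (A : Set α) (lam : α → ℤ) : Set (α → ℝ) :=
  { s ∈ markedChainPolytope A lam | ∀ x, ∃ n : ℤ, s x = (n : ℝ) }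

/-- The reduced poset of `(P, A, λ)`. -/
def reducedPoset [PartialOrder α] (A : Set α) (lam : α → ℤ) : Set α :=
  { x | ¬ ∃ a ∈ A, lam a = 0 ∧ x ≤ a }

/-- Cover relation within the full subposet `R`. -/
def CoversIn [PartialOrder α] (R : Set α) (x y : α) : Prop :=
  x ∈ R ∧ y ∈ R ∧ x < y ∧ ¬ ∃ z ∈ R, x < z ∧ z < y

/-- The Hasse diagram of the subposet `R` is connected. -/
def HasseConnected [PartialOrder α] (R : Set α) : Prop :=
  ∀ x ∈ R, ∀ y ∈ R,
    Relation.ReflTransGen (fun u v => CoversIn R u v ∨ CoversIn R v u) x y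

/-- `λ` is `C`-indecomposable. -/
def CIndecomposable [PartialOrder α] (A : Set α) (lam : α → ℤ) : Prop :=
  ∀ mu tau : α → ℤ, IsMarking A mu → IsMarking A tau →
    markedChainLattice A lam = markedChainLattice A mu + markedChainLattice A tau →
    (∀ a ∈ A, mu a = 0) ∨ (∀ a ∈ A, tau a = 0)

section AuxLemmas

variable [Fintype α] [PartialOrder α] {A P1 P2 : Set α} {lam : α → ℤ}

private lemma aux_min (a : α) : ∃ m, m ≤ a ∧ IsMin m := by
  obtain ⟨b, hba, hb⟩ := Finite.exists_le_minimal (p := fun _ : α => True) trivial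
  exact ⟨b, hba, fun x hx => hb.2 trivial hx⟩

private lemma aux_max (a : α) : ∃ m, a ≤ m ∧ IsMax m := by
  obtain ⟨b, hba, hb⟩ := Finite.exists_le_maximal (p := fun _ : α => True) trivial
  exact ⟨b, hba, fun x hx => hb.2 trivial hx⟩

private lemma aux_sum_map (l : List α) (f g : α → ℝ) :
    (l.map (fun x => f x + g x)).sum = (l.map f).sum + (l.map g).sum := by
  induction l with
  | nil => simp
  | cons a l ih => simp [ih]; ring

/-- If `x ∉ A` lies below a marked element with marking value `0`, then any point of the
marked chain polytope (of a nonnegative marking) vanishes at `x`. -/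
private lemma aux_vanish (hA : ContainsExtremals A) {mu : α → ℤ} (hmu : ∀ a ∈ A, 0 ≤ mu a)
    {s : α → ℝ} (hs : s ∈ markedChainPolytope A mu) {x b : α} (hx : x ∉ A)
    (hb : b ∈ A) (hb0 : mu b = 0) (hxb : x ≤ b) : s x = 0 := by
  have hxb' : x < b := lt_of_le_of_ne hxb (by rintro rfl; exact hx hb)
  obtain ⟨m, hmx, hm⟩ := aux_min x
  have hmA : m ∈ A := hA.1 m hm
  have hmx' : m < x := lt_of_le_of_ne hmx (by rintro rfl; exact hx hmA)
  have hchain : MChain A m b [x] :=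
    ⟨hmA, hb, by simp, by simpa using hx, by simp [List.Chain', List.isChain_cons_cons, hmx', hxb']⟩
  have h1 := hs.2.2 m b [x] hchain
  have h2 := hs.2.1 x hx
  have h3 : (0:ℝ) ≤ (mu m : ℝ) := by exact_mod_cast hmu m hmA
  simp only [List.map_cons, List.map_nil, List.sum_cons, List.sum_nil, add_zero, hb0,
    Int.cast_zero] at h1
  linarith

/-- Membership in the reduced poset for marked elements under a 0/1 marking. -/
private lemma aux_red (hlam : IsMarking A lam) (h01 : ∀ a ∈ A, lam a = 0 ∨ lam a = 1)
    {a : α} (ha : a ∈ A) : a ∈ reducedPoset A lam ↔ lam a = 1 := by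
  constructor
  · intro hR
    rcases h01 a ha with h | h
    · exact absurd ⟨a, ha, h, le_refl a⟩ hR
    · exact h
  · rintro h1 ⟨b, hbA, hb0, hab⟩
    rcases eq_or_lt_of_le hab with rfl | hab'
    · rw [h1] at hb0; exact one_ne_zero hb0
    · have := hlam.2 a ha b hbA hab'
      omega

private lemma aux_nonneg (hlam : IsMarking A lam) :
    ∀ a ∈ A, 0 ≤ ((A ∩ P1).indicator lam) a := by
  intro a ha
  by_cases h : a ∈ A ∩ P1
  · rw [Set.indicator_of_mem h lam]; exact hlam.1 a ha
  · rw [Set.indicator_of_notMem h lam]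

/-- The restricted marking agrees with `lam` on `A \ P2`. -/
private lemma aux_agree (hlam : IsMarking A lam) (h01 : ∀ a ∈ A, lam a = 0 ∨ lam a = 1)
    (hsplit : reducedPoset A lam = P1 ∪ P2)
    {a : α} (ha : a ∈ A) (ha2 : a ∉ P2) : ((A ∩ P1).indicator lam) a = lam a := by
  by_cases h : a ∈ P1
  · rw [Set.indicator_of_mem (Set.mem_inter ha h) lam]
  · rw [Set.indicator_of_notMem (fun hc => h hc.2) lam]
    rcases h01 a ha with h0 | h1
    · omega
    · have : a ∈ reducedPoset A lam := (aux_red hlam h01 ha).mpr h1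
      rw [hsplit] at this
      rcases this with h' | h' <;> [exact absurd h' h; exact absurd h' ha2]

/-- The restricted marking is weakly increasing on `A`. -/
private lemma aux_mono (hlam : IsMarking A lam) (h01 : ∀ a ∈ A, lam a = 0 ∨ lam a = 1)
    (hsplit : reducedPoset A lam = P1 ∪ P2)
    (hincomp : ∀ x ∈ P1, ∀ y ∈ P2, ¬ x ≤ y ∧ ¬ y ≤ x)
    {a b : α} (ha : a ∈ A) (hb : b ∈ A) (hab : a < b) :
    ((A ∩ P1).indicator lam) a ≤ ((A ∩ P1).indicator lam) b := by
  by_cases h : a ∈ A ∩ P1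
  · rw [Set.indicator_of_mem h lam]
    have haR : a ∈ reducedPoset A lam := by rw [hsplit]; exact Or.inl h.2
    have ha1 : lam a = 1 := (aux_red hlam h01 ha).mp haR
    have hble : lam a ≤ lam b := hlam.2 a ha b hb hab
    have hb1 : lam b = 1 := by rcases h01 b hb with h' | h' <;> omega
    have hbR : b ∈ reducedPoset A lam := (aux_red hlam h01 hb).mpr hb1
    rw [hsplit] at hbR
    rcases hbR with h' | h'
    · rw [Set.indicator_of_mem (Set.mem_inter hb h') lam]; omega
    · exact absurd hab.le (hincomp a h.2 b h').1
  · rw [Set.indicator_of_notMem h lam]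
    exact aux_nonneg hlam b hb

/-- Key lemma: the `P1`-part of a lattice point of `S_C(lam)` is a lattice point of
`S_C(lam¹)`. -/
private lemma aux_part (hA : ContainsExtremals A) (hlam : IsMarking A lam)
    (h01 : ∀ a ∈ A, lam a = 0 ∨ lam a = 1)
    (hsplit : reducedPoset A lam = P1 ∪ P2)
    (hincomp : ∀ x ∈ P1, ∀ y ∈ P2, ¬ x ≤ y ∧ ¬ y ≤ x)
    {s : α → ℝ} (hs : s ∈ markedChainLattice A lam) :
    (P1 \ A).indicator s ∈ markedChainLattice A ((A ∩ P1).indicator lam) := by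
  obtain ⟨⟨hzero, hnn, hchain⟩, hint⟩ := hs
  -- a point of the big polytope vanishes outside the reduced poset
  have hvan : ∀ x, x ∉ A → x ∉ reducedPoset A lam → s x = 0 := by
    intro x hxA hxR
    rw [reducedPoset, Set.mem_setOf_eq, not_not] at hxR
    obtain ⟨b, hbA, hb0, hxb⟩ := hxR
    exact aux_vanish hA hlam.1 ⟨hzero, hnn, hchain⟩ hxA hbA hb0 hxb
  refine ⟨⟨?_, ?_, ?_⟩, ?_⟩
  · intro x hx
    exact Set.indicator_of_notMem (fun hc => hc.2 hx) s
  · intro x hx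
    by_cases h : x ∈ P1 \ A
    · rw [Set.indicator_of_mem h]; exact hnn x hx
    · rw [Set.indicator_of_notMem h]
  · rintro a b l ⟨haA, hbA, hlne, hlA, hch⟩
    -- extract pairwise information from the chain
    have hpw : List.Pairwise (· < ·) (a :: (l ++ [b])) :=
      List.isChain_iff_pairwise.mp hch
    rw [List.pairwise_cons] at hpw
    obtain ⟨halt, hpw⟩ := hpw
    rw [List.pairwise_append] at hpw
    obtain ⟨hpwl, -, hltb⟩ := hpw
    have hab : a < b := halt b (by simp)
    have haltl : ∀ x ∈ l, a < x := fun x hx => halt x (by simp [hx])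
    have hltbl : ∀ x ∈ l, x < b := fun x hx => hltb x hx b (by simp)
    have hcompl : ∀ x ∈ l, ∀ y ∈ l, x ≠ y → x < y ∨ y < x := by
      have : List.Pairwise (fun x y => x < y ∨ y < x) l :=
        hpwl.imp (fun h => Or.inl h)
      have hsy : Std.Symm (fun x y : α => x < y ∨ y < x) := ⟨fun _ _ h => h.symm⟩
      exact fun x hx y hy hxy =>
        List.Pairwise.forall this hx hy hxy
    by_cases hP1 : ∃ x ∈ l, x ∈ P1
    · -- some chain element is in P1: no element is in P2, the sum is unchanged
      obtain ⟨x0, hx0l, hx0P1⟩ := hP1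
      have haP2 : a ∉ P2 := fun hc => (hincomp x0 hx0P1 a hc).2 (haltl x0 hx0l).le
      have hbP2 : b ∉ P2 := fun hc => (hincomp x0 hx0P1 b hc).1 (hltbl x0 hx0l).le
      have heq : ∀ x ∈ l, (P1 \ A).indicator s x = s x := by
        intro x hx
        by_cases hxP1 : x ∈ P1
        · exact Set.indicator_of_mem (Set.mem_diff_of_mem hxP1 (hlA x hx)) s
        · rw [Set.indicator_of_notMem (fun hc => hxP1 hc.1)]
          have hxP2 : x ∉ P2 := by
            intro hc
            have hne : x0 ≠ x := fun h => hxP1 (h ▸ hx0P1)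
            rcases hcompl x0 hx0l x hx hne with h' | h'
            · exact (hincomp x0 hx0P1 x hc).1 h'.le
            · exact (hincomp x0 hx0P1 x hc).2 h'.le
          refine (hvan x (hlA x hx) ?_).symm
          rw [hsplit]; rintro (h' | h') <;> [exact hxP1 h'; exact hxP2 h']
      rw [List.map_congr_left heq]
      rw [aux_agree hlam h01 hsplit haA haP2, aux_agree hlam h01 hsplit hbA hbP2]
      exact hchain a b l ⟨haA, hbA, hlne, hlA, hch⟩
    · -- no chain element is in P1: the sum is zero
      push_neg at hP1
      have hsum0 : (l.map ((P1 \ A).indicator s)).sum = 0 := by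
        apply List.sum_eq_zero
        intro x hx
        obtain ⟨y, hyl, rfl⟩ := List.mem_map.mp hx
        exact Set.indicator_of_notMem (fun hc => hP1 y hyl hc.1) s
      rw [hsum0]
      have := aux_mono (P1 := P1) (P2 := P2) hlam h01 hsplit hincomp haA hbA hab
      have h' : (((A ∩ P1).indicator lam a : ℤ) : ℝ) ≤ (((A ∩ P1).indicator lam b : ℤ) : ℝ) :=
        Int.cast_le.mpr this
      linarith
  · intro x
    by_cases h : x ∈ P1 \ A
    · rw [Set.indicator_of_mem h]; exact hint x
    · rw [Set.indicator_of_notMem h]; exact ⟨0, by simp⟩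

end AuxLemmas

theorem stmt12 [Fintype α] [PartialOrder α] (A : Set α) (lam : α → ℤ) (P1 P2 : Set α)
    (hA : ContainsExtremals A) (hlam : IsMarking A lam) (h0 : ∃ a ∈ A, lam a = 0)
    (h01 : ∀ a ∈ A, lam a = 0 ∨ lam a = 1)
    (hsplit : reducedPoset A lam = P1 ∪ P2)
    (hdisj : Disjoint P1 P2)
    (hincomp : ∀ x ∈ P1, ∀ y ∈ P2, ¬ x ≤ y ∧ ¬ y ≤ x) :
    markedChainLattice A lam
      = markedChainLattice A ((A ∩ P1).indicator lam)
        + markedChainLattice A ((A ∩ P2).indicator lam) := by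
  have hincomp' : ∀ x ∈ P2, ∀ y ∈ P1, ¬ x ≤ y ∧ ¬ y ≤ x :=
    fun x hx y hy => ⟨(hincomp y hy x hx).2, (hincomp y hy x hx).1⟩
  have hsplit' : reducedPoset A lam = P2 ∪ P1 := by rw [hsplit, Set.union_comm]
  have hsum : ∀ a ∈ A, ((A ∩ P1).indicator lam) a + ((A ∩ P2).indicator lam) a = lam a := by
    intro a ha
    rcases h01 a ha with h0' | h1
    · have haR : a ∉ reducedPoset A lam := fun hc => by
        rw [aux_red hlam h01 ha] at hc; omega
      rw [hsplit] at haR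
      rw [Set.indicator_of_notMem (fun hc => haR (Or.inl hc.2)) lam,
        Set.indicator_of_notMem (fun hc => haR (Or.inr hc.2)) lam]
      omega
    · have haR : a ∈ reducedPoset A lam := (aux_red hlam h01 ha).mpr h1
      rw [hsplit] at haR
      rcases haR with h' | h'
      · rw [Set.indicator_of_mem (Set.mem_inter ha h') lam,
          Set.indicator_of_notMem
            (fun hc => Set.disjoint_left.mp hdisj h' hc.2) lam]
        omega
      · rw [Set.indicator_of_mem (Set.mem_inter ha h') lam,
          Set.indicator_of_notMem
            (fun hc => Set.disjoint_right.mp hdisj h' hc.2) lam]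
        omega
  ext s
  simp only [Set.mem_add]
  constructor
  · intro hs
    refine ⟨(P1 \ A).indicator s, aux_part hA hlam h01 hsplit hincomp hs,
      (P2 \ A).indicator s, aux_part hA hlam h01 hsplit' hincomp' hs, ?_⟩
    funext x
    show (P1 \ A).indicator s x + (P2 \ A).indicator s x = s x
    by_cases hxA : x ∈ A
    · rw [Set.indicator_of_notMem (fun hc => hc.2 hxA) s,
        Set.indicator_of_notMem (fun hc => hc.2 hxA) s, hs.1.1 x hxA]
      norm_num
    by_cases hx1 : x ∈ P1
    · rw [Set.indicator_of_mem (Set.mem_diff_of_mem hx1 hxA) s,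
        Set.indicator_of_notMem
          (fun hc => Set.disjoint_left.mp hdisj hx1 hc.1) s]
      ring
    by_cases hx2 : x ∈ P2
    · rw [Set.indicator_of_notMem (fun hc => hx1 hc.1) s,
        Set.indicator_of_mem (Set.mem_diff_of_mem hx2 hxA) s]
      ring
    · rw [Set.indicator_of_notMem (fun hc => hx1 hc.1) s,
        Set.indicator_of_notMem (fun hc => hx2 hc.1) s]
      have hxR : x ∉ reducedPoset A lam := by
        rw [hsplit]; rintro (h' | h') <;> [exact hx1 h'; exact hx2 h']
      rw [reducedPoset, Set.mem_setOf_eq, not_not] at hxR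
      obtain ⟨b, hbA, hb0, hxb⟩ := hxR
      rw [aux_vanish hA hlam.1 hs.1 hxA hbA hb0 hxb]
      norm_num
  · rintro ⟨s1, hs1, s2, hs2, rfl⟩
    refine ⟨⟨?_, ?_, ?_⟩, ?_⟩
    · intro x hx
      show s1 x + s2 x = 0
      rw [hs1.1.1 x hx, hs2.1.1 x hx]; norm_num
    · intro x hx
      exact add_nonneg (hs1.1.2.1 x hx) (hs2.1.2.1 x hx)
    · intro a b l hC
      have e : l.map (s1 + s2) = l.map (fun x => s1 x + s2 x) := rfl
      rw [e, aux_sum_map]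
      have h1 := hs1.1.2.2 a b l hC
      have h2 := hs2.1.2.2 a b l hC
      have hsa : (((A ∩ P1).indicator lam) a : ℝ) + (((A ∩ P2).indicator lam) a : ℝ)
          = (lam a : ℝ) := by exact_mod_cast hsum a hC.1
      have hsb : (((A ∩ P1).indicator lam) b : ℝ) + (((A ∩ P2).indicator lam) b : ℝ)
          = (lam b : ℝ) := by exact_mod_cast hsum b hC.2.1
      linarith
    · intro x
      obtain ⟨n, hn⟩ := hs1.2 x
      obtain ⟨m, hm⟩ := hs2.2 x
      refine ⟨n + m, ?_⟩
      show s1 x + s2 x = ((n + m : ℤ) : ℝ)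
      rw [hn, hm]; push_cast; ring
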